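/- Let (X,d) be an ultrametric space with at least two points. If the diametrical graph G_{X,d} is nonempty (has at least one edge), then the relation on X defined by 'u ~ v iff u = v or {u,v} is not an edge of G_{X,d}' is an equivalence relation with at least two equivalence classes, and any two vertices in different classes are adjacent; i.e., G_{X,d} is complete multipartite. -/

import Mathlib

/-- In an ultrametric space with at least two points, if the diametrical graph is
nonempty, then it is complete multipartite: non-adjacency (with equality) is an
equivalence relation with at least two classes (vertices in distinct classes are
adjacent by definition of the relation). -/
theorem stmt_4 {X : Type*} [MetricSpace X] [Nontrivial X]
    (hU : ∀ x y z : X, dist x y ≤ max (dist x z) (dist z y))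
    (hne : ∃ u v : X, u ≠ v ∧ dist u v = Metric.diam (Set.univ : Set X)) :
    Equivalence (fun u v : X => u = v ∨ dist u v ≠ Metric.diam (Set.univ : Set X)) ∧
    (∃ u v : X, ¬ (u = v ∨ dist u v ≠ Metric.diam (Set.univ : Set X))) ∧
    (∀ u v : X, ¬ (u = v ∨ dist u v ≠ Metric.diam (Set.univ : Set X)) →
      u ≠ v ∧ dist u v = Metric.diam (Set.univ : Set X)) := by
  obtain ⟨u₀, v₀, huv₀, hd₀⟩ := hne
  have hdpos : 0 < Metric.diam (Set.univ : Set X) := by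
    rw [← hd₀]; exact dist_pos.mpr huv₀
  have hbdd : Bornology.IsBounded (Set.univ : Set X) := by
    by_contra h
    have : Metric.diam (Set.univ : Set X) = 0 := by
      rw [Metric.diam, Metric.ediam_of_unbounded h, ENNReal.toReal_top]
    linarith
  have hle : ∀ x y : X, dist x y ≤ Metric.diam (Set.univ : Set X) := fun x y =>
    Metric.dist_le_diam_of_mem hbdd (Set.mem_univ x) (Set.mem_univ y)
  refine ⟨⟨fun x => Or.inl rfl, ?_, ?_⟩, ⟨u₀, v₀, ?_⟩, ?_⟩
  · rintro x y (rfl | h)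
    · exact Or.inl rfl
    · exact Or.inr (by rwa [dist_comm])
  · rintro x y z (rfl | hxy) (rfl | hyz)
    · exact Or.inl rfl
    · exact Or.inr hyz
    · exact Or.inr hxy
    · refine Or.inr (ne_of_lt ?_)
      calc dist x z ≤ max (dist x y) (dist y z) := hU x z y
        _ < Metric.diam (Set.univ : Set X) :=
          max_lt (lt_of_le_of_ne (hle x y) hxy) (lt_of_le_of_ne (hle y z) hyz)
  · push_neg
    exact ⟨huv₀, hd₀⟩
  · intro u v h
    push_neg at h
    exact h
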